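/- The transformation π₃ of the symmetric P_IV-type system, (x,y,z,w) ↦ (2i(xy+zw-α₁)/x, ix(xy+α₂)/(2(xy+zw-α₁)), 2i(xy+zw-α₁)/z, iz(zw+α₃)/(2(xy+zw-α₁))), with t ↦ -it, s ↦ -is, is symplectic: it preserves dx∧dy + dz∧dw on the open set x,z ≠ 0 and xy+zw-α₁ ≠ 0. -/

import Mathlib

open Complex

noncomputable def Dv (f : ℂ × ℂ × ℂ × ℂ → ℂ) (p v : ℂ × ℂ × ℂ × ℂ) : ℂ :=
  fderiv ℂ f p v

def omega (u v : ℂ × ℂ × ℂ × ℂ) : ℂ :=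
  (u.1 * v.2.1 - v.1 * u.2.1) + (u.2.2.1 * v.2.2.2 - v.2.2.1 * u.2.2.2)

noncomputable def pullback (X Y Z W : ℂ × ℂ × ℂ × ℂ → ℂ) (p u v : ℂ × ℂ × ℂ × ℂ) : ℂ :=
  (Dv X p u * Dv Y p v - Dv X p v * Dv Y p u)
    + (Dv Z p u * Dv W p v - Dv Z p v * Dv W p u)

set_option maxHeartbeats 4000000 in
/-- The transformation π₃ of the symmetric P_IV-type system is symplectic on the
open set x ≠ 0, z ≠ 0, xy + zw - α₁ ≠ 0. -/
theorem pi3_symplectic (α₁ α₂ α₃ : ℂ) (p : ℂ × ℂ × ℂ × ℂ)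
    (hx : p.1 ≠ 0) (hz : p.2.2.1 ≠ 0)
    (hD : p.1 * p.2.1 + p.2.2.1 * p.2.2.2 - α₁ ≠ 0) :
    ∀ u v : ℂ × ℂ × ℂ × ℂ,
      pullback
        (fun q => 2 * I * (q.1 * q.2.1 + q.2.2.1 * q.2.2.2 - α₁) / q.1)
        (fun q => I * q.1 * (q.1 * q.2.1 + α₂) /
          (2 * (q.1 * q.2.1 + q.2.2.1 * q.2.2.2 - α₁)))
        (fun q => 2 * I * (q.1 * q.2.1 + q.2.2.1 * q.2.2.2 - α₁) / q.2.2.1)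
        (fun q => I * q.2.2.1 * (q.2.2.1 * q.2.2.2 + α₃) /
          (2 * (q.1 * q.2.1 + q.2.2.1 * q.2.2.2 - α₁))) p u v = omega u v := by
  intro u v
  have h1 : HasFDerivAt (fun q : ℂ × ℂ × ℂ × ℂ => q.1)
      (ContinuousLinearMap.fst ℂ ℂ (ℂ × ℂ × ℂ)) p := hasFDerivAt_fst
  have h2 : HasFDerivAt (fun q : ℂ × ℂ × ℂ × ℂ => q.2.1)
      ((ContinuousLinearMap.fst ℂ ℂ (ℂ × ℂ)).comp (ContinuousLinearMap.snd ℂ ℂ (ℂ × ℂ × ℂ))) p :=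
    hasFDerivAt_fst.comp p hasFDerivAt_snd
  have h3 : HasFDerivAt (fun q : ℂ × ℂ × ℂ × ℂ => q.2.2.1)
      ((ContinuousLinearMap.fst ℂ ℂ ℂ).comp
        ((ContinuousLinearMap.snd ℂ ℂ (ℂ × ℂ)).comp (ContinuousLinearMap.snd ℂ ℂ (ℂ × ℂ × ℂ)))) p :=
    hasFDerivAt_fst.comp p (hasFDerivAt_snd.comp p hasFDerivAt_snd)
  have h4 : HasFDerivAt (fun q : ℂ × ℂ × ℂ × ℂ => q.2.2.2)
      ((ContinuousLinearMap.snd ℂ ℂ ℂ).comp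
        ((ContinuousLinearMap.snd ℂ ℂ (ℂ × ℂ)).comp (ContinuousLinearMap.snd ℂ ℂ (ℂ × ℂ × ℂ)))) p :=
    hasFDerivAt_snd.comp p (hasFDerivAt_snd.comp p hasFDerivAt_snd)
  have hDD := ((h1.mul h2).add (h3.mul h4)).sub_const α₁
  have h2D : (2 : ℂ) * (p.1 * p.2.1 + p.2.2.1 * p.2.2.2 - α₁) ≠ 0 := by
    exact mul_ne_zero two_ne_zero hD
  have hinv1 : HasFDerivAt (fun q : ℂ × ℂ × ℂ × ℂ => (q.1)⁻¹) _ p :=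
    (hasFDerivAt_inv hx).comp p h1
  have hinv3 : HasFDerivAt (fun q : ℂ × ℂ × ℂ × ℂ => (q.2.2.1)⁻¹) _ p :=
    (hasFDerivAt_inv hz).comp p h3
  have hinvD : HasFDerivAt
      (fun q : ℂ × ℂ × ℂ × ℂ => (2 * (q.1 * q.2.1 + q.2.2.1 * q.2.2.2 - α₁))⁻¹) _ p :=
    (hasFDerivAt_inv h2D).comp p (hDD.const_mul 2)
  have hX : HasFDerivAt
      (fun q : ℂ × ℂ × ℂ × ℂ => 2 * I * (q.1 * q.2.1 + q.2.2.1 * q.2.2.2 - α₁) * (q.1)⁻¹)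
      _ p := (hDD.const_mul (2 * I)).mul hinv1
  have hY : HasFDerivAt
      (fun q : ℂ × ℂ × ℂ × ℂ => I * q.1 * (q.1 * q.2.1 + α₂) *
          (2 * (q.1 * q.2.1 + q.2.2.1 * q.2.2.2 - α₁))⁻¹)
      _ p := ((h1.const_mul I).mul ((h1.mul h2).add_const α₂)).mul hinvD
  have hZ : HasFDerivAt
      (fun q : ℂ × ℂ × ℂ × ℂ => 2 * I * (q.1 * q.2.1 + q.2.2.1 * q.2.2.2 - α₁) * (q.2.2.1)⁻¹)
      _ p := (hDD.const_mul (2 * I)).mul hinv3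
  have hW : HasFDerivAt
      (fun q : ℂ × ℂ × ℂ × ℂ => I * q.2.2.1 * (q.2.2.1 * q.2.2.2 + α₃) *
          (2 * (q.1 * q.2.1 + q.2.2.1 * q.2.2.2 - α₁))⁻¹)
      _ p := ((h3.const_mul I).mul ((h3.mul h4).add_const α₃)).mul hinvD
  have eX : ∀ w : ℂ × ℂ × ℂ × ℂ,
      fderiv ℂ (fun q : ℂ × ℂ × ℂ × ℂ =>
        2 * I * (q.1 * q.2.1 + q.2.2.1 * q.2.2.2 - α₁) * (q.1)⁻¹) p w =
      2 * I * (p.1 * (p.2.1 * w.1 + p.1 * w.2.1 + p.2.2.2 * w.2.2.1 + p.2.2.1 * w.2.2.2)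
        - (p.1 * p.2.1 + p.2.2.1 * p.2.2.2 - α₁) * w.1) / p.1 ^ 2 := by
    intro w
    rw [hX.fderiv]
    simp only [ContinuousLinearMap.smul_apply, ContinuousLinearMap.sub_apply,
      ContinuousLinearMap.add_apply, ContinuousLinearMap.comp_apply,
      ContinuousLinearMap.smulRight_apply, ContinuousLinearMap.one_apply,
      ContinuousLinearMap.coe_fst', ContinuousLinearMap.coe_snd', smul_eq_mul,
      Pi.mul_apply, Pi.add_apply, ContinuousLinearMap.toSpanSingleton_apply]
    field_simp
    ring
  have eY : ∀ w : ℂ × ℂ × ℂ × ℂ,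
      fderiv ℂ (fun q : ℂ × ℂ × ℂ × ℂ => I * q.1 * (q.1 * q.2.1 + α₂) *
        (2 * (q.1 * q.2.1 + q.2.2.1 * q.2.2.2 - α₁))⁻¹) p w =
      I * (2 * (p.1 * p.2.1 + p.2.2.1 * p.2.2.2 - α₁) *
          ((2 * p.1 * p.2.1 + α₂) * w.1 + p.1 ^ 2 * w.2.1)
        - 2 * p.1 * (p.1 * p.2.1 + α₂) *
          (p.2.1 * w.1 + p.1 * w.2.1 + p.2.2.2 * w.2.2.1 + p.2.2.1 * w.2.2.2)) /
        (4 * (p.1 * p.2.1 + p.2.2.1 * p.2.2.2 - α₁) ^ 2) := by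
    intro w
    rw [hY.fderiv]
    simp only [ContinuousLinearMap.smul_apply, ContinuousLinearMap.sub_apply,
      ContinuousLinearMap.add_apply, ContinuousLinearMap.comp_apply,
      ContinuousLinearMap.smulRight_apply, ContinuousLinearMap.one_apply,
      ContinuousLinearMap.coe_fst', ContinuousLinearMap.coe_snd', smul_eq_mul,
      Pi.mul_apply, Pi.add_apply, ContinuousLinearMap.toSpanSingleton_apply]
    field_simp
    ring
  have eZ : ∀ w : ℂ × ℂ × ℂ × ℂ,
      fderiv ℂ (fun q : ℂ × ℂ × ℂ × ℂ =>
        2 * I * (q.1 * q.2.1 + q.2.2.1 * q.2.2.2 - α₁) * (q.2.2.1)⁻¹) p w =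
      2 * I * (p.2.2.1 * (p.2.1 * w.1 + p.1 * w.2.1 + p.2.2.2 * w.2.2.1 + p.2.2.1 * w.2.2.2)
        - (p.1 * p.2.1 + p.2.2.1 * p.2.2.2 - α₁) * w.2.2.1) / p.2.2.1 ^ 2 := by
    intro w
    rw [hZ.fderiv]
    simp only [ContinuousLinearMap.smul_apply, ContinuousLinearMap.sub_apply,
      ContinuousLinearMap.add_apply, ContinuousLinearMap.comp_apply,
      ContinuousLinearMap.smulRight_apply, ContinuousLinearMap.one_apply,
      ContinuousLinearMap.coe_fst', ContinuousLinearMap.coe_snd', smul_eq_mul,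
      Pi.mul_apply, Pi.add_apply, ContinuousLinearMap.toSpanSingleton_apply]
    field_simp
    ring
  have eW : ∀ w : ℂ × ℂ × ℂ × ℂ,
      fderiv ℂ (fun q : ℂ × ℂ × ℂ × ℂ => I * q.2.2.1 * (q.2.2.1 * q.2.2.2 + α₃) *
        (2 * (q.1 * q.2.1 + q.2.2.1 * q.2.2.2 - α₁))⁻¹) p w =
      I * (2 * (p.1 * p.2.1 + p.2.2.1 * p.2.2.2 - α₁) *
          ((2 * p.2.2.1 * p.2.2.2 + α₃) * w.2.2.1 + p.2.2.1 ^ 2 * w.2.2.2)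
        - 2 * p.2.2.1 * (p.2.2.1 * p.2.2.2 + α₃) *
          (p.2.1 * w.1 + p.1 * w.2.1 + p.2.2.2 * w.2.2.1 + p.2.2.1 * w.2.2.2)) /
        (4 * (p.1 * p.2.1 + p.2.2.1 * p.2.2.2 - α₁) ^ 2) := by
    intro w
    rw [hW.fderiv]
    simp only [ContinuousLinearMap.smul_apply, ContinuousLinearMap.sub_apply,
      ContinuousLinearMap.add_apply, ContinuousLinearMap.comp_apply,
      ContinuousLinearMap.smulRight_apply, ContinuousLinearMap.one_apply,
      ContinuousLinearMap.coe_fst', ContinuousLinearMap.coe_snd', smul_eq_mul,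
      Pi.mul_apply, Pi.add_apply, ContinuousLinearMap.toSpanSingleton_apply]
    field_simp
    ring
  simp only [pullback, Dv, div_eq_mul_inv] at *
  simp only [eX, eY, eZ, eW, omega]
  field_simp [hx, hz, hD, show p.1 * p.2.1 + p.2.2.2 * p.2.2.1 - α₁ ≠ 0 by rwa [mul_comm p.2.2.2]]
  ring_nf
  simp only [Complex.I_sq]
  ring
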